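/- Every permutation α on the Cartesian product V₁ × V₂ can be written as α = α₁ ∘ α₂ ∘ α₁', where α₁ and α₁' preserve every column V₁ × {u₂} and α₂ preserves every row {v₁} × V₂. (Existence of the decomposition, independent of graph structure.) -/

import Mathlib

open Finset

lemma count_aux {X V₂ : Type*} [Fintype X] [DecidableEq V₂] (g : X → V₂)
    (S : Finset X) (T : Finset V₂) :
    (S.filter (fun x => g x ∈ T)).card = ∑ c ∈ T, (S.filter (fun x => g x = c)).card := by
  rw [Finset.card_eq_sum_card_fiberwise (f := g) (s := S.filter (fun x => g x ∈ T)) (t := T)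
    (fun x hx => (Finset.mem_filter.mp hx).2)]
  refine Finset.sum_congr rfl fun c hc => ?_
  congr 1
  ext x
  simp only [Finset.mem_filter]
  constructor
  · rintro ⟨⟨h1, _⟩, h3⟩; exact ⟨h1, h3⟩
  · rintro ⟨h1, h3⟩; exact ⟨⟨h1, h3 ▸ hc⟩, h3⟩
lemma exists_matching {X V₂ : Type*} [Fintype X] [DecidableEq X] [DecidableEq V₂]
    (g F : X → V₂) (S : Finset X) (k : ℕ) (hk : 0 < k)
    (hcol : ∀ c, (S.filter (fun x => g x = c)).card = k)
    (hfib : ∀ c, (S.filter (fun x => F x = c)).card = k) :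
    ∃ M : V₂ → X, (∀ c, M c ∈ S ∧ g (M c) = c) ∧ Function.Injective (fun c => F (M c)) := by
  set t : V₂ → Finset V₂ := fun c => (S.filter (fun x => g x = c)).image F with ht
  have hall : ∀ T : Finset V₂, T.card ≤ (T.biUnion t).card := by
    intro T
    have h1 : (S.filter (fun x => g x ∈ T)).card = k * T.card := by
      rw [count_aux]; simp [hcol, mul_comm]
    have h2 : (S.filter (fun x => F x ∈ T.biUnion t)).card = k * (T.biUnion t).card := by
      rw [count_aux]; simp [hfib, mul_comm]
    have hsub : S.filter (fun x => g x ∈ T) ⊆ S.filter (fun x => F x ∈ T.biUnion t) := by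
      intro x hx
      rw [Finset.mem_filter] at hx ⊢
      refine ⟨hx.1, Finset.mem_biUnion.mpr ⟨g x, hx.2, ?_⟩⟩
      exact Finset.mem_image.mpr ⟨x, Finset.mem_filter.mpr ⟨hx.1, rfl⟩, rfl⟩
    have := Finset.card_le_card hsub
    rw [h1, h2] at this
    exact Nat.le_of_mul_le_mul_left this hk
  obtain ⟨f, hfinj, hft⟩ := (Finset.all_card_le_biUnion_card_iff_exists_injective t).mp hall
  have hex : ∀ c, ∃ x, (x ∈ S ∧ g x = c) ∧ F x = f c := by
    intro c
    obtain ⟨x, hx, hFx⟩ := Finset.mem_image.mp (hft c)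
    exact ⟨x, Finset.mem_filter.mp hx, hFx⟩
  choose M hM hFM using hex
  refine ⟨M, hM, ?_⟩
  intro c c' h
  apply hfinj
  simpa [hFM] using h
lemma decompose {X V₂ : Type*} [Fintype X] [DecidableEq X] [Fintype V₂] [DecidableEq V₂]
    (g F : X → V₂) : ∀ (k : ℕ) (S : Finset X),
    (∀ c, (S.filter (fun x => g x = c)).card = k) →
    (∀ c, (S.filter (fun x => F x = c)).card = k) →
    ∃ M : Fin k → V₂ → X,
      (∀ i c, M i c ∈ S) ∧ (∀ i c, g (M i c) = c) ∧
      (∀ i, Function.Injective (fun c => F (M i c))) ∧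
      (∀ c, Function.Injective (fun i => M i c)) := by
  intro k
  induction k with
  | zero =>
    intro S _ _
    exact ⟨fun i => i.elim0, fun i => i.elim0, fun i => i.elim0,
      fun i => i.elim0, fun c i => i.elim0⟩
  | succ k ih =>
    intro S hcol hfib
    obtain ⟨M₀, hM₀, hFM₀⟩ := exists_matching g F S (k + 1) (Nat.succ_pos k) hcol hfib
    set I : Finset X := Finset.univ.image M₀ with hI
    have hmemI : ∀ x, x ∈ I ↔ ∃ c, M₀ c = x := by
      intro x; simp [hI]
    set S' : Finset X := S \ I with hS'
    have hcol' : ∀ c, (S'.filter (fun x => g x = c)).card = k := by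
      intro c
      have he : S'.filter (fun x => g x = c) = (S.filter (fun x => g x = c)).erase (M₀ c) := by
        ext x
        simp only [hS', Finset.mem_filter, Finset.mem_sdiff, Finset.mem_erase, hmemI]
        constructor
        · rintro ⟨⟨hxS, hxI⟩, hgx⟩
          exact ⟨fun h => hxI ⟨c, h.symm⟩, hxS, hgx⟩
        · rintro ⟨hne, hxS, hgx⟩
          refine ⟨⟨hxS, ?_⟩, hgx⟩
          rintro ⟨c', rfl⟩
          exact hne (by rw [(hM₀ c').2] at hgx; rw [hgx])
      rw [he, Finset.card_erase_of_mem
        (by simp only [Finset.mem_filter]; exact ⟨(hM₀ c).1, (hM₀ c).2⟩), hcol]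
      omega
    have hsurj : Function.Surjective (fun c => F (M₀ c)) :=
      Finite.surjective_of_injective hFM₀
    have hfib' : ∀ c, (S'.filter (fun x => F x = c)).card = k := by
      intro c
      obtain ⟨c'', hc''⟩ := hsurj c
      have he : S'.filter (fun x => F x = c) = (S.filter (fun x => F x = c)).erase (M₀ c'') := by
        ext x
        simp only [hS', Finset.mem_filter, Finset.mem_sdiff, Finset.mem_erase, hmemI]
        constructor
        · rintro ⟨⟨hxS, hxI⟩, hgx⟩
          exact ⟨fun h => hxI ⟨c'', h.symm⟩, hxS, hgx⟩
        · rintro ⟨hne, hxS, hgx⟩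
          refine ⟨⟨hxS, ?_⟩, hgx⟩
          rintro ⟨c', rfl⟩
          exact hne (congrArg M₀ (hFM₀ (show F (M₀ c') = F (M₀ c'') by simp only at hc'' ⊢; rw [hgx, ← hc''])))
      rw [he, Finset.card_erase_of_mem
        (by simp only [Finset.mem_filter]; exact ⟨(hM₀ c'').1, hc''⟩), hfib]
      omega
    obtain ⟨M', hM'S, hM'g, hM'F, hM'inj⟩ := ih S' hcol' hfib'
    have hM'notI : ∀ i c, M' i c ∉ I := fun i c =>
      (Finset.mem_sdiff.mp (hM'S i c)).2
    refine ⟨fun i => Fin.cases M₀ M' i, ?_, ?_, ?_, ?_⟩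
    · intro i c
      induction i using Fin.cases with
      | zero => simpa using (hM₀ c).1
      | succ i => simpa using (Finset.mem_sdiff.mp (hM'S i c)).1
    · intro i c
      induction i using Fin.cases with
      | zero => simpa using (hM₀ c).2
      | succ i => simpa using hM'g i c
    · intro i
      induction i using Fin.cases with
      | zero => simpa using hFM₀
      | succ i => simpa using hM'F i
    · intro c i j h
      induction i using Fin.cases with
      | zero =>
        induction j using Fin.cases with
        | zero => rfl
        | succ j =>
          exfalso
          exact hM'notI j c (by rw [← show M₀ c = M' j c by simpa using h, hmemI]; exact ⟨c, rfl⟩)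
      | succ i =>
        induction j using Fin.cases with
        | zero =>
          exfalso
          exact hM'notI i c (by rw [show M' i c = M₀ c by simpa using h, hmemI]; exact ⟨c, rfl⟩)
        | succ j =>
          exact congrArg Fin.succ (hM'inj c (by simpa using h))

/-- Every permutation `α` on a product `V₁ × V₂` of finite sets can be
written as `α = α₁ ∘ α₂ ∘ α₁'`, where `α₁` and `α₁'` are column permutations (preserving
every column `V₁ × {u₂}`, i.e. fixing the second coordinate) and `α₂` is a row permutation
(preserving every row `{v₁} × V₂`, i.e. fixing the first coordinate). -/
theorem stmt_5 {V₁ V₂ : Type*} [Fintype V₁] [Fintype V₂] (α : Equiv.Perm (V₁ × V₂)) :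
    ∃ α₁ α₂ α₁' : Equiv.Perm (V₁ × V₂),
      (∀ x, (α₁ x).2 = x.2) ∧ (∀ x, (α₁' x).2 = x.2) ∧ (∀ x, (α₂ x).1 = x.1) ∧
      α = α₁ * α₂ * α₁' := by
  classical
  set k := Fintype.card V₁ with hk
  set F : V₁ × V₂ → V₂ := fun x => (α x).2 with hF
  have hcol : ∀ c : V₂, ((Finset.univ : Finset (V₁ × V₂)).filter
      (fun x => Prod.snd x = c)).card = k := by
    intro c
    have himg : (Finset.univ : Finset (V₁ × V₂)).filter (fun x => Prod.snd x = c) =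
        Finset.univ.image (fun r : V₁ => (r, c)) := by
      ext x
      simp only [Finset.mem_filter, Finset.mem_univ, true_and, Finset.mem_image]
      constructor
      · intro h; exact ⟨x.1, by rw [← h]⟩
      · rintro ⟨r, rfl⟩; rfl
    rw [himg, Finset.card_image_of_injective _ (fun r r' h => (Prod.mk.injEq _ _ _ _ ▸ h).1),
      Finset.card_univ]
  have hfib : ∀ c : V₂, ((Finset.univ : Finset (V₁ × V₂)).filter
      (fun x => F x = c)).card = k := by
    intro c
    have himg : (Finset.univ : Finset (V₁ × V₂)).filter (fun x => F x = c) =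
        ((Finset.univ : Finset (V₁ × V₂)).filter (fun x => Prod.snd x = c)).image α.symm := by
      ext x
      simp only [Finset.mem_filter, Finset.mem_univ, true_and, Finset.mem_image, hF]
      constructor
      · intro h; exact ⟨α x, h, α.symm_apply_apply x⟩
      · rintro ⟨y, hy, rfl⟩; rw [α.apply_symm_apply]; exact hy
    rw [himg, Finset.card_image_of_injective _ α.symm.injective, hcol]
  obtain ⟨M, hMS, hMg, hMF, hMinj⟩ :=
    decompose (Prod.snd : V₁ × V₂ → V₂) F k Finset.univ hcol hfib
  set e : V₁ ≃ Fin k := Fintype.equivFin V₁ with he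
  have σinj : ∀ c : V₂, Function.Injective (fun r : V₁ => (M (e r) c).1) := by
    intro c r r' h
    apply e.injective
    apply hMinj c
    have h2 : (M (e r) c).2 = (M (e r') c).2 := by rw [hMg, hMg]
    exact Prod.ext h h2
  set σ : V₂ → Equiv.Perm V₁ := fun c =>
    Equiv.ofBijective _ ((Finite.injective_iff_bijective).mp (σinj c)) with hσ
  set C : Equiv.Perm (V₁ × V₂) :=
    { toFun := fun x => (σ x.2 x.1, x.2)
      invFun := fun x => ((σ x.2).symm x.1, x.2)
      left_inv := fun x => by simp
      right_inv := fun x => by simp } with hCdef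
  have hC : ∀ x : V₁ × V₂, C x = M (e x.1) x.2 := by
    intro x
    refine Prod.ext rfl ?_
    show x.2 = (M (e x.1) x.2).2
    rw [hMg]
  set τ : V₁ → Equiv.Perm V₂ := fun r =>
    Equiv.ofBijective (fun c => F (M (e r) c))
      ((Finite.injective_iff_bijective).mp (hMF (e r))) with hτ
  set R : Equiv.Perm (V₁ × V₂) :=
    { toFun := fun x => (x.1, τ x.1 x.2)
      invFun := fun x => (x.1, (τ x.1).symm x.2)
      left_inv := fun x => by simp
      right_inv := fun x => by simp } with hRdef
  refine ⟨α * C * R⁻¹, R, C⁻¹, ?_, ?_, ?_, ?_⟩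
  · intro x
    have h1 : (α * C * R⁻¹) x = α (C (R⁻¹ x)) := rfl
    have h2 : R⁻¹ x = (x.1, (τ x.1).symm x.2) := by rw [Equiv.Perm.inv_def]; rfl
    rw [h1, h2, hC]
    show F (M (e x.1) ((τ x.1).symm x.2)) = x.2
    have h3 : F (M (e x.1) ((τ x.1).symm x.2)) = τ x.1 ((τ x.1).symm x.2) := rfl
    rw [h3, Equiv.apply_symm_apply]
  · intro x
    rw [Equiv.Perm.inv_def]
    rfl
  · intro x
    rfl
  · group
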